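/- Let A ∈ ℝ^{N×N}, B, C ∈ ℝ^{N×n_s}, and let ε ∈ {+1, -1}. A matrix D ∈ ℝ^{N×N} with Dᵀ = ε·D is a minimizer of ‖C - A·D·B‖² subject to the constraint Dᵀ = ε·D (Frobenius norm) if and only if it satisfies the matrix equation AᵀA·D·BBᵀ + BBᵀ·D·AᵀA = AᵀCBᵀ + ε·BCᵀA. -/

import Mathlib

open Matrix

/-- Squared Frobenius norm. -/
def frob2 {m n : ℕ} (M : Matrix (Fin m) (Fin n) ℝ) : ℝ := ∑ i, ∑ j, (M i j) ^ 2

lemma frob2_eq {m n : ℕ} (M : Matrix (Fin m) (Fin n) ℝ) : frob2 M = trace (Mᵀ * M) := by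
  simp only [frob2, Matrix.trace, Matrix.diag, Matrix.mul_apply, Matrix.transpose_apply, sq]
  rw [Finset.sum_comm]

lemma frob2_nonneg {m n : ℕ} (M : Matrix (Fin m) (Fin n) ℝ) : 0 ≤ frob2 M :=
  Finset.sum_nonneg fun _ _ => Finset.sum_nonneg fun _ _ => sq_nonneg _

lemma frob2_eq_zero {m n : ℕ} {M : Matrix (Fin m) (Fin n) ℝ} (h : frob2 M = 0) : M = 0 := by
  ext i j
  have h1 := (Finset.sum_eq_zero_iff_of_nonneg
    (fun i _ => Finset.sum_nonneg fun j _ => sq_nonneg (M i j))).mp h i (Finset.mem_univ i)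
  have h2 := (Finset.sum_eq_zero_iff_of_nonneg
    (fun j _ => sq_nonneg (M i j))).mp h1 j (Finset.mem_univ j)
  simpa using pow_eq_zero_iff (n := 2) (by norm_num) |>.mp h2

lemma frob2_smul {m n : ℕ} (t : ℝ) (M : Matrix (Fin m) (Fin n) ℝ) :
    frob2 (t • M) = t ^ 2 * frob2 M := by
  simp [frob2, Finset.mul_sum, mul_pow]

lemma frob2_sub {m n : ℕ} (X Y : Matrix (Fin m) (Fin n) ℝ) :
    frob2 (X - Y) = frob2 X - 2 * trace (Xᵀ * Y) + frob2 Y := by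
  rw [frob2_eq, frob2_eq, frob2_eq, transpose_sub, Matrix.sub_mul, Matrix.mul_sub,
    Matrix.mul_sub, trace_sub, trace_sub, trace_sub]
  have h : trace (Yᵀ * X) = trace (Xᵀ * Y) := by
    rw [← trace_transpose (Yᵀ * X), transpose_mul, transpose_transpose]
  rw [h]; ring

theorem constrained_lsq_optimality {N ns : ℕ} (A : Matrix (Fin N) (Fin N) ℝ)
    (B C : Matrix (Fin N) (Fin ns) ℝ) (ε : ℝ) (hε : ε = 1 ∨ ε = -1)
    (D : Matrix (Fin N) (Fin N) ℝ) (hD : Dᵀ = ε • D) :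
    (∀ D' : Matrix (Fin N) (Fin N) ℝ, D'ᵀ = ε • D' →
        frob2 (C - A * D * B) ≤ frob2 (C - A * D' * B)) ↔
      Aᵀ * A * D * (B * Bᵀ) + B * Bᵀ * D * (Aᵀ * A) = Aᵀ * C * Bᵀ + ε • (B * Cᵀ * A) := by
  have hε2 : ε * ε = 1 := by rcases hε with h | h <;> simp [h]
  set R := C - A * D * B with hR
  set G := Aᵀ * R * Bᵀ with hG
  have hGT : Gᵀ = B * Rᵀ * A := by
    rw [hG, transpose_mul, transpose_mul, transpose_transpose, transpose_transpose,
      Matrix.mul_assoc]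
  -- the matrix equation is equivalent to G + ε • Gᵀ = 0
  have hGid : G + ε • Gᵀ =
      (Aᵀ * C * Bᵀ + ε • (B * Cᵀ * A)) - (Aᵀ * A * D * (B * Bᵀ) + B * Bᵀ * D * (Aᵀ * A)) := by
    rw [hGT, hG, hR, transpose_sub, transpose_mul, transpose_mul, hD]
    simp only [Matrix.mul_sub, Matrix.sub_mul, smul_sub, Matrix.mul_smul, Matrix.smul_mul,
      smul_smul, hε2, one_smul, Matrix.mul_assoc]
    abel
  have keyEq : (Aᵀ * A * D * (B * Bᵀ) + B * Bᵀ * D * (Aᵀ * A) =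
      Aᵀ * C * Bᵀ + ε • (B * Cᵀ * A)) ↔ G + ε • Gᵀ = 0 := by
    rw [hGid, sub_eq_zero, eq_comm]
  -- expansion of the objective
  have expand : ∀ D' : Matrix (Fin N) (Fin N) ℝ,
      frob2 (C - A * D' * B) =
        frob2 R - 2 * trace (Gᵀ * (D' - D)) + frob2 (A * (D' - D) * B) := by
    intro D'
    have h1 : C - A * D' * B = R - A * (D' - D) * B := by
      rw [hR, Matrix.mul_sub, Matrix.sub_mul]; abel
    rw [h1, frob2_sub]
    have h2 : trace (Rᵀ * (A * (D' - D) * B)) = trace (Gᵀ * (D' - D)) := by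
      rw [show Rᵀ * (A * (D' - D) * B) = (Rᵀ * (A * (D' - D))) * B by
        simp only [Matrix.mul_assoc], trace_mul_comm, hGT]
      simp only [Matrix.mul_assoc]
    rw [h2]
  -- pairing identity for constrained E
  have pairing : ∀ E : Matrix (Fin N) (Fin N) ℝ, Eᵀ = ε • E →
      2 * trace (Gᵀ * E) = trace ((G + ε • Gᵀ)ᵀ * E) := by
    intro E hE
    have h1 : trace (Gᵀ * E) = ε * trace (G * E) := by
      rw [← trace_transpose (Gᵀ * E), transpose_mul, transpose_transpose, hE,
        Matrix.smul_mul, trace_smul, trace_mul_comm, smul_eq_mul]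
    rw [transpose_add, transpose_smul, transpose_transpose, Matrix.add_mul,
      Matrix.smul_mul, trace_add, trace_smul, smul_eq_mul, ← h1]
    ring
  constructor
  · -- minimality → equation
    intro hmin
    rw [keyEq]
    set P := (1/2 : ℝ) • (G + ε • Gᵀ) with hP
    have hPsym : Pᵀ = ε • P := by
      rw [hP, transpose_smul, transpose_add, transpose_smul, transpose_transpose]
      rw [smul_comm ε ((1:ℝ)/2)]
      congr 1
      rw [smul_add, smul_smul, hε2, one_smul, add_comm]
    have hP2 : G + ε • Gᵀ = (2 : ℝ) • P := by
      rw [hP, smul_smul]; norm_num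
    set s := trace (Gᵀ * P) with hs
    set q := frob2 (A * P * B) with hq
    have hqn : 0 ≤ q := frob2_nonneg _
    have hsP : s = frob2 P := by
      have := pairing P hPsym
      rw [hP2, transpose_smul, Matrix.smul_mul, trace_smul, smul_eq_mul, ← frob2_eq] at this
      linarith [this]
    have hineq : ∀ t : ℝ, 0 ≤ -2 * (t * s) + t ^ 2 * q := by
      intro t
      have hsym : (D + t • P)ᵀ = ε • (D + t • P) := by
        rw [transpose_add, transpose_smul, hD, hPsym, smul_add, smul_comm]
      have := hmin (D + t • P) hsym
      rw [expand (D + t • P)] at this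
      have hsimp : D + t • P - D = t • P := by abel
      rw [hsimp] at this
      have h3 : trace (Gᵀ * (t • P)) = t * s := by
        rw [Matrix.mul_smul, trace_smul, smul_eq_mul, hs]
      have h4 : A * (t • P) * B = t • (A * P * B) := by
        rw [Matrix.mul_smul, Matrix.smul_mul]
      rw [h3, h4, frob2_smul, ← hq] at this
      linarith
    have hs0 : s = 0 := by
      have hq1 : (0:ℝ) < q + 1 := by linarith
      have ht := hineq (s / (q + 1))
      have hsn : 0 ≤ s := hsP ▸ frob2_nonneg P
      have hne : (q + 1) ≠ 0 := ne_of_gt hq1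
      field_simp at ht
      rw [zero_mul] at ht
      nlinarith [sq_nonneg s, mul_pos hq1 hq1, sq_nonneg (q+1)]
    have hPz : P = 0 := frob2_eq_zero (by rw [← hsP, hs0])
    rw [hP2, hPz, smul_zero]
  · -- equation → minimality
    intro heq D' hD'
    rw [keyEq] at heq
    have hE : (D' - D)ᵀ = ε • (D' - D) := by
      rw [transpose_sub, hD', hD, smul_sub]
    have h0 : 2 * trace (Gᵀ * (D' - D)) = 0 := by
      rw [pairing (D' - D) hE, heq, transpose_zero, Matrix.zero_mul, trace_zero]
    rw [expand D']
    have := frob2_nonneg (A * (D' - D) * B)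
    linarith
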